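/- Let p be a prime and n ≥ 1 with p not dividing n. Let A be an n×n matrix over F_p = ZMod p that achieves average consensus (A is row-stochastic, 𝟙ᵀ A = 𝟙ᵀ, and its characteristic polynomial is X^{n−1}(X−1)). Let B be an m×n matrix over F_p with B 𝟙 = 0, let L be an n×m matrix over F_p, and let η ∈ F_p^m be an arbitrary (possibly noisy) measurement vector. For an initial state x(0) ∈ F_p^n define the iteration x(t+1) = A x(t) + L η and the estimation error e(t) = η − B x(t). Then there exists T < n such that the estimation error is constant from time T onward: e(t) = e(T) for all t ≥ T. -/

import Mathlib

open Matrix Polynomial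

lemma aux_charpoly (p : ℕ) [Fact p.Prime] (n : ℕ) (hn : 1 ≤ n)
    (A : Matrix (Fin n) (Fin n) (ZMod p))
    (hrow : ∀ i, ∑ k, A i k = 1)
    (hchar : A.charpoly = X ^ (n - 1) * (X - 1))
    (c : ZMod p) (hc : (n : ZMod p) * c = 1) :
    (A - Matrix.of (fun _ _ => c)).charpoly = X ^ n := by
  classical
  set K := RatFunc (ZMod p)
  set φ : (ZMod p)[X] →+* K := algebraMap (ZMod p)[X] K with hφ
  have hφinj : Function.Injective φ := IsFractionRing.injective _ _
  apply hφinj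
  set J : Matrix (Fin n) (Fin n) (ZMod p) := Matrix.of (fun _ _ => c) with hJ
  -- charmatrix splits
  have hcm : charmatrix (A - J) = charmatrix A + J.map C := by
    ext i j
    simp only [charmatrix, RingHom.mapMatrix_apply, Matrix.map_sub, Matrix.sub_apply,
      Matrix.add_apply, Matrix.map_apply, map_sub]
    ring_nf
  have hdet : φ ((A - J).charpoly) = ((charmatrix (A - J)).map φ).det := by
    rw [Matrix.charpoly, RingHom.map_det, RingHom.mapMatrix_apply]
  set Aφ : Matrix (Fin n) (Fin n) K := (charmatrix A).map φ with hAφ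
  have hAφdet : Aφ.det = φ (A.charpoly) := by
    rw [Matrix.charpoly, RingHom.map_det, RingHom.mapMatrix_apply]
  have hcp0 : A.charpoly ≠ 0 := by
    rw [hchar]
    exact mul_ne_zero (pow_ne_zero _ X_ne_zero)
      (by simpa using X_sub_C_ne_zero (1 : ZMod p))
  have hAφdet0 : IsUnit Aφ.det := by
    rw [hAφdet, isUnit_iff_ne_zero]
    intro h
    exact hcp0 (hφinj (by rw [h, map_zero]))
  -- rank one decomposition of J
  have hJφ : (J.map C).map φ
      = Matrix.replicateCol Unit (fun _ => φ (C c)) * Matrix.replicateRow Unit (fun _ => (1 : K)) := by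
    ext i j
    simp [Matrix.mul_apply, hJ]
  -- row sums of charmatrix A are X - 1
  have hsum : ∀ i, ∑ j, Aφ i j = φ (X - 1) := by
    intro i
    have h0 : ∑ j, charmatrix A i j = X - 1 := by
      have h1 : ∑ j, charmatrix A i j =
          (∑ j, (Matrix.diagonal fun _ : Fin n => (X : (ZMod p)[X])) i j) - ∑ j, C (A i j) := by
        rw [← Finset.sum_sub_distrib]; rfl
      rw [h1, Finset.sum_eq_single i (fun b _ hb => Matrix.diagonal_apply_ne _ (Ne.symm hb))
        (by simp), Matrix.diagonal_apply_eq, ← map_sum, hrow i, Polynomial.C_1]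
    calc ∑ j, Aφ i j = φ (∑ j, charmatrix A i j) := (map_sum φ _ _).symm
    _ = φ (X - 1) := by rw [h0]
  set s : K := φ (X - 1) with hs
  have hXC : (X - 1 : (ZMod p)[X]) ≠ 0 := by simpa using X_sub_C_ne_zero (1 : ZMod p)
  have hs0 : s ≠ 0 := by
    rw [hs]; intro h; exact hXC (hφinj (by rw [h, map_zero]))
  -- inverse row sums
  have hmul1 : Aφ *ᵥ (fun _ => (1 : K)) = fun _ => s := by
    funext i
    simp only [Matrix.mulVec, dotProduct, mul_one]
    exact hsum i
  have hinv1 : Aφ⁻¹ *ᵥ (fun _ => (1 : K)) = fun _ => s⁻¹ := by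
    have h1 : Aφ⁻¹ *ᵥ (Aφ *ᵥ (fun _ => (1 : K))) = fun _ => (1 : K) := by
      rw [Matrix.mulVec_mulVec, Matrix.nonsing_inv_mul _ hAφdet0, Matrix.one_mulVec]
    rw [hmul1] at h1
    have h2 : Aφ⁻¹ *ᵥ (fun _ => s) = fun i => s * (Aφ⁻¹ *ᵥ (fun _ => (1 : K))) i := by
      funext i
      simp only [Matrix.mulVec, dotProduct, mul_one, Finset.mul_sum]
      exact Finset.sum_congr rfl fun j _ => by ring
    rw [h2] at h1
    funext i
    exact eq_inv_of_mul_eq_one_right (congrFun h1 i)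
  have hinvsum : ∀ i, ∑ j, Aφ⁻¹ i j = s⁻¹ := by
    intro i
    have h4 := congrFun hinv1 i
    simpa [Matrix.mulVec, dotProduct] using h4
  -- the matrix determinant lemma
  rw [hdet, hcm, Matrix.map_add _ φ.map_add]
  have hAA : (A.charmatrix.map ⇑φ) = Aφ := rfl
  rw [hAA, hJφ, Matrix.det_add_replicateCol_mul_replicateRow hAφdet0]
  have hdet1 : (1 + (Matrix.replicateRow Unit (fun _ => (1:K)) : Matrix Unit (Fin n) K) * Aφ⁻¹ *
      (Matrix.replicateCol Unit (fun _ => φ (C c)) : Matrix (Fin n) Unit K)).det = 1 + s⁻¹ := by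
    rw [Matrix.det_unique]
    simp only [Matrix.add_apply, Matrix.one_apply_eq, Matrix.mul_apply, Matrix.replicateCol_apply,
      Matrix.replicateRow_apply, Fintype.sum_unique, one_mul]
    congr 1
    rw [← Finset.sum_mul, Finset.sum_comm]
    have h5 : ∑ i, ∑ j, Aφ⁻¹ i j = (n : K) * s⁻¹ := by
      rw [Finset.sum_congr rfl fun i _ => hinvsum i]
      simp [Finset.sum_const, nsmul_eq_mul]
    rw [h5]
    have h6 : (n : K) * φ (C c) = 1 := by
      have : (n : K) = φ (C (n : ZMod p)) := by
        rw [map_natCast, map_natCast]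
      rw [this, ← φ.map_mul, ← C_mul, hc, Polynomial.C_1, φ.map_one]
    calc (n : K) * s⁻¹ * φ (C c) = (n : K) * φ (C c) * s⁻¹ := by ring
    _ = s⁻¹ := by rw [h6, one_mul]
  rw [hdet1, hAφdet, hchar]
  have h7 : φ (X - 1) = s := rfl
  rw [φ.map_mul, φ.map_pow, h7, φ.map_pow]
  have h8 : s * (1 + s⁻¹) = φ X := by
    rw [mul_add, mul_one, mul_inv_cancel₀ hs0, hs, map_sub, φ.map_one]
    ring
  calc φ X ^ (n - 1) * s * (1 + s⁻¹) = φ X ^ (n - 1) * (s * (1 + s⁻¹)) := by ring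
  _ = φ X ^ (n - 1) * φ X := by rw [h8]
  _ = φ X ^ n := by rw [← pow_succ, Nat.sub_add_cancel hn]


/-- Distributed pose estimation with noisy measurements: if `A` achieves
average consensus over `ZMod p` (row-stochastic, column-stochastic, with
characteristic polynomial `X^(n-1)(X-1)`) and `B 𝟙 = 0`, then for any
measurement vector `η` the estimation error `e(t) = η - B x(t)` of the
iteration `x(t+1) = A x(t) + L η` becomes constant after a finite time
`T < n`. -/
theorem finiteField_pose_estimation_noisy
    (p n m : ℕ) [Fact p.Prime] (hn : 1 ≤ n) (hpn : ¬ p ∣ n)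
    (A : Matrix (Fin n) (Fin n) (ZMod p))
    (hrow : A *ᵥ (1 : Fin n → ZMod p) = 1)
    (hcol : (1 : Fin n → ZMod p) ᵥ* A = 1)
    (hchar : A.charpoly = X ^ (n - 1) * (X - 1))
    (B : Matrix (Fin m) (Fin n) (ZMod p))
    (hB : B *ᵥ (1 : Fin n → ZMod p) = 0)
    (L : Matrix (Fin n) (Fin m) (ZMod p))
    (η : Fin m → ZMod p)
    (x : ℕ → Fin n → ZMod p)
    (hx : ∀ t : ℕ, x (t + 1) = A *ᵥ x t + L *ᵥ η) :
    ∃ T : ℕ, T < n ∧ ∀ t ≥ T, η - B *ᵥ x t = η - B *ᵥ x T := by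
  classical
  have hn0 : (n : ZMod p) ≠ 0 := by
    intro h
    exact hpn ((ZMod.natCast_eq_zero_iff n p).mp h)
  set c : ZMod p := (n : ZMod p)⁻¹ with hc_def
  have hnc : (n : ZMod p) * c = 1 := mul_inv_cancel₀ hn0
  set J : Matrix (Fin n) (Fin n) (ZMod p) := Matrix.of (fun _ _ => c) with hJ
  -- entrywise sum facts
  have hrow' : ∀ i, ∑ k, A i k = 1 := by
    intro i
    have := congrFun hrow i
    simpa [Matrix.mulVec, dotProduct] using this
  have hcol' : ∀ j, ∑ k, A k j = 1 := by
    intro j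
    have := congrFun hcol j
    simpa [Matrix.vecMul, dotProduct] using this
  have hB' : ∀ i, ∑ k, B i k = 0 := by
    intro i
    have := congrFun hB i
    simpa [Matrix.mulVec, dotProduct] using this
  -- products with J
  have hAJ : A * J = J := by
    ext i j
    simp only [Matrix.mul_apply, hJ, Matrix.of_apply, ← Finset.sum_mul, hrow' i, one_mul]
  have hJA : J * A = J := by
    ext i j
    simp only [Matrix.mul_apply, hJ, Matrix.of_apply, ← Finset.mul_sum, hcol' j, mul_one]
  have hJJ : J * J = J := by
    ext i j
    simp only [Matrix.mul_apply, hJ, Matrix.of_apply, Finset.sum_const, Finset.card_univ,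
      Fintype.card_fin, nsmul_eq_mul, ← mul_assoc, hnc, one_mul]
  have hBJ : B * J = 0 := by
    ext i j
    simp only [Matrix.mul_apply, hJ, Matrix.of_apply, ← Finset.sum_mul, hB' i, zero_mul,
      Matrix.zero_apply]
  -- Cayley–Hamilton for A : A^n = A^(n-1)
  have hCH : A ^ n = A ^ (n - 1) := by
    have h0 := Matrix.aeval_self_charpoly A
    rw [hchar] at h0
    have h1 : A ^ (n - 1) * (A - 1) = 0 := by
      simpa [_root_.map_mul, map_pow, map_sub, aeval_X, _root_.map_one] using h0
    have h2 : A ^ (n - 1) * A - A ^ (n - 1) = 0 := by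
      rw [← h1, mul_sub, mul_one]
    have h3 : A ^ (n - 1) * A = A ^ (n - 1) := by
      rwa [sub_eq_zero] at h2
    calc A ^ n = A ^ (n - 1 + 1) := by rw [Nat.sub_add_cancel hn]
    _ = A ^ (n - 1) * A := pow_succ _ _
    _ = A ^ (n - 1) := h3
  -- nilpotency of A - J
  have hNchar : (A - J).charpoly = X ^ n := aux_charpoly p n hn A hrow' hchar c hnc
  have hNn : (A - J) ^ n = 0 := by
    have h0 := Matrix.aeval_self_charpoly (A - J)
    rw [hNchar] at h0
    simpa [map_pow, aeval_X] using h0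
  -- A^k * J = J
  have hAkJ : ∀ k, A ^ (k + 1) * J = J := by
    intro k
    induction k with
    | zero => simpa using hAJ
    | succ k ih => rw [pow_succ, mul_assoc, hAJ, ih]
  -- (A - J)^(k+1) = A^(k+1) - J
  have hNk : ∀ k, (A - J) ^ (k + 1) = A ^ (k + 1) - J := by
    intro k
    induction k with
    | zero => simp
    | succ k ih =>
      rw [pow_succ, ih, sub_mul, mul_sub, mul_sub, hJA, hJJ, hAkJ, ← pow_succ]
      abel
  -- A^(n-1) = J and A^t = J for t ≥ n - 1
  have hAn : A ^ n = J := by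
    obtain ⟨k, hk⟩ := Nat.exists_eq_add_of_le hn
    have := hNk (n - 1)
    rw [Nat.sub_add_cancel hn] at this
    rw [this] at hNn
    rwa [sub_eq_zero] at hNn
  have hAt : ∀ t, n - 1 ≤ t → A ^ t = J := by
    intro t ht
    induction t, ht using Nat.le_induction with
    | base => rw [← hCH, hAn]
    | succ t ht ih => rw [pow_succ, ih, hJA]
  -- the difference sequence
  set d : ℕ → Fin n → ZMod p := fun t => x (t + 1) - x t with hd_def
  have hd : ∀ t, d t = (A ^ t) *ᵥ d 0 := by
    intro t
    induction t with
    | zero => simp [Matrix.one_mulVec]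
    | succ t ih =>
      have : d (t + 1) = A *ᵥ d t := by
        simp only [hd_def, hx (t + 1), hx t]
        rw [Matrix.mulVec_sub]
        abel
      rw [this, ih, Matrix.mulVec_mulVec, ← pow_succ']
  have hBd : ∀ t, n - 1 ≤ t → B *ᵥ d t = 0 := by
    intro t ht
    rw [hd t, hAt t ht, Matrix.mulVec_mulVec, hBJ, Matrix.zero_mulVec]
  refine ⟨n - 1, by omega, ?_⟩
  intro t ht
  have hBx : B *ᵥ x t = B *ᵥ x (n - 1) := by
    induction t, ht using Nat.le_induction with
    | base => rfl
    | succ t ht ih =>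
      have hx1 : x (t + 1) = x t + d t := by simp [hd_def]
      rw [hx1, Matrix.mulVec_add, hBd t ht, add_zero, ih]
  rw [hBx]
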